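/- If T is a Frobenius monad on a dagger category C, then the operation sending a Kleisli morphism f : A → T(B) to T(f†) ∘ μ_B† ∘ η_B : B → T(A) defines a dagger on the Kleisli category C_T (it is contravariant and involutive for Kleisli composition and fixes objects), and the canonical functors C → C_T and C_T → C are dagger functors. -/

import Mathlib

open CategoryTheory Category MonoidalCategory

universe v u

/-- A dagger structure on a category: a contravariant, identity-on-objects,
involutive operation on morphisms. -/
class DaggerStruct (C : Type u) [Category.{v} C] where
  dag : ∀ {X Y : C}, (X ⟶ Y) → (Y ⟶ X)
  dag_dag : ∀ {X Y : C} (f : X ⟶ Y), dag (dag f) = f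
  dag_id : ∀ X : C, dag (𝟙 X) = 𝟙 X
  dag_comp : ∀ {X Y Z : C} (f : X ⟶ Y) (g : Y ⟶ Z), dag (f ≫ g) = dag g ≫ dag f

notation:max f "†" => DaggerStruct.dag f

/-- A monoidal dagger category: the dagger cooperates with the monoidal structure. -/
class MonoidalDagger (C : Type u) [Category.{v} C] [MonoidalCategory C] extends
    DaggerStruct C where
  dag_tensor : ∀ {X₁ Y₁ X₂ Y₂ : C} (f : X₁ ⟶ Y₁) (g : X₂ ⟶ Y₂), (f ⊗ₘ g)† = f† ⊗ₘ g†
  assoc_unitary : ∀ X Y Z : C, ((α_ X Y Z).hom)† = (α_ X Y Z).inv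
  lunitor_unitary : ∀ X : C, ((λ_ X).hom)† = (λ_ X).inv
  runitor_unitary : ∀ X : C, ((ρ_ X).hom)† = (ρ_ X).inv

/-- A symmetric monoidal dagger category: additionally the symmetries are unitary. -/
class SymmetricDagger (C : Type u) [Category.{v} C] [MonoidalCategory C]
    [SymmetricCategory C] extends MonoidalDagger C where
  braiding_unitary : ∀ X Y : C, ((β_ X Y).hom)† = (β_ X Y).inv

/-- A monoid object, given by explicit data. -/
structure IsMonoidObj {C : Type u} [Category.{v} C] [MonoidalCategory C] (A : C)
    (m : A ⊗ A ⟶ A) (u : 𝟙_ C ⟶ A) : Prop where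
  mul_assoc : (m ⊗ₘ 𝟙 A) ≫ m = (α_ A A A).hom ≫ (𝟙 A ⊗ₘ m) ≫ m
  one_mul : (u ⊗ₘ 𝟙 A) ≫ m = (λ_ A).hom
  mul_one : (𝟙 A ⊗ₘ u) ≫ m = (ρ_ A).hom

/-- A Frobenius monoid in a monoidal dagger category. -/
structure IsFrobeniusMonoid {C : Type u} [Category.{v} C] [MonoidalCategory C]
    [MonoidalDagger C] (A : C) (m : A ⊗ A ⟶ A) (u : 𝟙_ C ⟶ A) extends
    IsMonoidObj A m u : Prop where
  frobenius : (m† ⊗ₘ 𝟙 A) ≫ (α_ A A A).hom ≫ (𝟙 A ⊗ₘ m) =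
    (𝟙 A ⊗ₘ m†) ≫ (α_ A A A).inv ≫ (m ⊗ₘ 𝟙 A)

/-- A Frobenius monad on a dagger category. -/
structure IsFrobeniusMonad {C : Type u} [Category.{v} C] [DaggerStruct C]
    (T : Monad C) : Prop where
  map_dag : ∀ {X Y : C} (f : X ⟶ Y), T.map (f†) = (T.map f)†
  frobenius : ∀ A : C,
    ((T.μ.app (T.obj A))†) ≫ T.map (T.μ.app A) =
      T.map ((T.μ.app A)†) ≫ T.μ.app (T.obj A)

/-- The dagger on the Kleisli category of a Frobenius monad:
`f : A ⟶ T(B)` is sent to `T(f†) ∘ μ_B† ∘ η_B : B ⟶ T(A)`. -/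
def kleisliDag {C : Type u} [Category.{v} C] [DaggerStruct C] (T : Monad C)
    {X Y : C} (f : X ⟶ T.obj Y) : Y ⟶ T.obj X :=
  T.η.app Y ≫ ((T.μ.app Y)†) ≫ T.map (f†)


section Aux

variable {C : Type u} [Category.{v} C] [DaggerStruct C] (T : Monad C)

open DaggerStruct

lemma mu_dag_nat (hT : IsFrobeniusMonad T) {X Y : C} (h : Y ⟶ X) :
    T.map h ≫ ((T.μ.app X)†) = ((T.μ.app Y)†) ≫ T.map (T.map h) := by
  have := congrArg (fun f => f†) (T.μ.naturality (h†))
  simp only [Functor.comp_map, dag_comp, ← hT.map_dag, dag_dag] at this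
  exact this.symm

lemma key (hT : IsFrobeniusMonad T) (A : C) :
    T.map (T.η.app A) ≫ T.map ((T.μ.app A)†) ≫ T.μ.app (T.obj A)
      = (T.μ.app A)† := by
  rw [← hT.frobenius A, ← Category.assoc, mu_dag_nat T hT (T.η.app A),
    Category.assoc, ← T.map_comp]
  have h1 : T.map (T.η.app A) ≫ T.μ.app A = 𝟙 (T.obj A) := T.right_unit A
  have h2 : (T.μ.app ((𝟭 C).obj A))† = (T.μ.app A)† := rfl
  rw [h2]
  show (T.μ.app A)† ≫ T.map (T.map (T.η.app A) ≫ T.μ.app A) = (T.μ.app A)†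
  rw [h1, T.map_id]
  simp

lemma forget_dag (hT : IsFrobeniusMonad T) {X Y : C} (f : X ⟶ T.obj Y) :
    T.map (kleisliDag T f) ≫ T.μ.app X = ((T.map f ≫ T.μ.app Y)†) := by
  have nat : T.map (T.map (f†)) ≫ T.μ.app X = T.μ.app (T.obj Y) ≫ T.map (f†) := by
    have := T.μ.naturality (f†); simpa using this
  simp only [kleisliDag, Functor.map_comp, Category.assoc]
  rw [nat]
  slice_lhs 1 3 => rw [key T hT Y]
  rw [dag_comp, hT.map_dag]

omit [DaggerStruct C] in
lemma eta_forget {X Y : C} (f : X ⟶ T.obj Y) :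
    T.η.app X ≫ T.map f ≫ T.μ.app Y = f := by
  rw [← Category.assoc, ← T.η.naturality f, Functor.id_map, Category.assoc,
    T.left_unit, Category.comp_id]

end Aux

/-- STATEMENT 10: if `T` is a Frobenius monad on a dagger category `C`, then
`f ↦ T(f†) ∘ μ† ∘ η` is a dagger on the Kleisli category `C_T` (involutive,
identity-on-objects and contravariant for Kleisli composition), and the canonical
functors `C → C_T` (`f ↦ η ∘ f`) and `C_T → C` (`f ↦ μ ∘ T(f)`) are dagger functors. -/
theorem kleisli_dagger {C : Type u} [Category.{v} C] [DaggerStruct C] (T : Monad C)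
    (hT : IsFrobeniusMonad T) :
    (∀ {X Y : C} (f : X ⟶ T.obj Y), kleisliDag T (kleisliDag T f) = f) ∧
    (∀ X : C, kleisliDag T (T.η.app X) = T.η.app X) ∧
    (∀ {X Y Z : C} (f : X ⟶ T.obj Y) (g : Y ⟶ T.obj Z),
      kleisliDag T (f ≫ T.map g ≫ T.μ.app Z) =
        kleisliDag T g ≫ T.map (kleisliDag T f) ≫ T.μ.app X) ∧
    (∀ {X Y : C} (f : X ⟶ Y), kleisliDag T (f ≫ T.η.app Y) = (f†) ≫ T.η.app X) ∧
    (∀ {X Y : C} (f : X ⟶ T.obj Y),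
      T.map (kleisliDag T f) ≫ T.μ.app X = ((T.map f ≫ T.μ.app Y)†)) := by
  refine ⟨?_, ?_, ?_, ?_, fun f => forget_dag T hT f⟩
  · intro X Y f
    conv_lhs => rw [← eta_forget T (kleisliDag T (kleisliDag T f)),
      forget_dag T hT, forget_dag T hT]
    rw [DaggerStruct.dag_dag, eta_forget]
  · intro X
    conv_lhs => rw [← eta_forget T (kleisliDag T (T.η.app X)), forget_dag T hT]
    rw [T.right_unit, DaggerStruct.dag_id]
    simp
  · intro X Y Z f g
    conv_lhs => rw [← eta_forget T (kleisliDag T (f ≫ T.map g ≫ T.μ.app Z)),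
      forget_dag T hT]
    rw [forget_dag T hT f]
    simp only [kleisliDag, Functor.map_comp, DaggerStruct.dag_comp,
      Category.assoc, ← hT.map_dag, DaggerStruct.dag_dag]
    have hassoc : ((T.μ.app Z)†) ≫ T.map ((T.μ.app Z)†)
        = ((T.μ.app Z)†) ≫ ((T.μ.app (T.obj Z))†) := by
      have := congrArg (fun k => k†) (T.assoc Z)
      simp only [DaggerStruct.dag_comp, ← hT.map_dag] at this
      exact this
    slice_lhs 2 3 => rw [hassoc]
    slice_lhs 3 4 => rw [← mu_dag_nat T hT (g†)]
    simp only [Category.assoc]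
  · intro X Y f
    conv_lhs => rw [← eta_forget T (kleisliDag T (f ≫ T.η.app Y)),
      forget_dag T hT]
    rw [Functor.map_comp, Category.assoc, T.right_unit]
    rw [show (T.map f ≫ 𝟙 (T.obj ((𝟭 C).obj Y)))† = (T.map f)† from by simp]
    rw [← hT.map_dag, ← T.η.naturality (f†), Functor.id_map]
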